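/- Let v_1, …, v_n be vectors in ℝ² with ⟨v_j, v_k⟩ ≥ 0 for all j, k. Then there exists an orthogonal transformation O of ℝ² such that O v_j lies in the nonnegative orthant ℝ²_{≥0} for all j. -/

import Mathlib

private lemma sine_lemma (W nu nv Su Sv Cu Cv : ℝ) (hW : 0 < W) (hnu : 0 < nu) (hnv : 0 < nv)
    (hCu : 0 ≤ Cu) (hCv : 0 ≤ Cv)
    (hu : Cu^2 + Su^2 = W * nu^2) (hv : Cv^2 + Sv^2 = W * nv^2)
    (hmin : Su * nv ≤ Sv * nu) : 0 ≤ Cu * Sv - Su * Cv := by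
  have key : (Cu*Sv)^2 - (Su*Cv)^2 = W * ((Sv*nu - Su*nv) * (Sv*nu + Su*nv)) := by
    linear_combination Sv^2 * hu - Su^2 * hv
  have f1 : 0 ≤ Sv*nu - Su*nv := by linarith
  rcases le_or_gt Sv 0 with hSv | hSv
  · have hSu : Su ≤ 0 := by nlinarith
    have f2 : Sv*nu + Su*nv ≤ 0 := by nlinarith
    have hk : 0 ≤ (Su*Cv)^2 - (Cu*Sv)^2 := by
      nlinarith [mul_nonneg (mul_nonneg hW.le f1) (neg_nonneg.2 f2)]
    nlinarith [mul_nonneg (neg_nonneg.2 hSu) hCv, mul_nonneg hCu (neg_nonneg.2 hSv)]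
  · rcases le_or_gt Su 0 with hSu | hSu
    · nlinarith [mul_nonneg hCu hSv.le, mul_nonneg (neg_nonneg.2 hSu) hCv]
    · have f2 : 0 ≤ Sv*nu + Su*nv := by positivity
      have hk : 0 ≤ (Cu*Sv)^2 - (Su*Cv)^2 := by
        nlinarith [mul_nonneg (mul_nonneg hW.le f1) f2]
      nlinarith [mul_nonneg hCu hSv.le, mul_nonneg hSu.le hCv]

theorem exists_orthogonal_map_to_nonneg_orthant_dim_two {n : ℕ}
    (v : Fin n → EuclideanSpace ℝ (Fin 2))
    (h : ∀ j k, (0:ℝ) ≤ inner ℝ (v j) (v k)) :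
    ∃ O : EuclideanSpace ℝ (Fin 2) ≃ₗᵢ[ℝ] EuclideanSpace ℝ (Fin 2),
      ∀ j i, 0 ≤ O (v j) i := by
  classical
  have hreal : ∀ j k, 0 ≤ v j 0 * v k 0 + v j 1 * v k 1 := by
    intro j k
    simpa [PiLp.inner_apply, Fin.sum_univ_two, RCLike.inner_apply] using h k j
  have hpos : ∀ j, v j ≠ 0 → 0 < (v j 0)^2 + (v j 1)^2 := by
    intro j hj
    rcases eq_or_ne (v j 0) 0 with h0 | h0
    · rcases eq_or_ne (v j 1) 0 with h1 | h1
      · exact absurd (PiLp.ext fun i => by fin_cases i <;> simpa using (by assumption)) hj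
      · positivity
    · positivity
  obtain ⟨a, b, hab, hcond⟩ :
      ∃ a b : ℝ, a^2 + b^2 = 1 ∧
        ∀ j, 0 ≤ a * v j 0 + b * v j 1 ∧ 0 ≤ a * v j 1 - b * v j 0 := by
    by_cases hz : ∀ j, v j = 0
    · exact ⟨1, 0, by norm_num, fun j => by simp [hz j]⟩
    · push_neg at hz
      obtain ⟨j0, hj0⟩ := hz
      set s : Finset (Fin n) := Finset.univ.filter (fun j => v j ≠ 0) with hs
      have hj0s : j0 ∈ s := by simp [hs, hj0]
      obtain ⟨j1, hj1s, hj1min⟩ := Finset.exists_min_image s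
        (fun j => (v j0 0 * v j 1 - v j0 1 * v j 0) / Real.sqrt ((v j 0)^2 + (v j 1)^2))
        ⟨j0, hj0s⟩
      have hj1 : v j1 ≠ 0 := by simpa [hs] using hj1s
      set r1 := Real.sqrt ((v j1 0)^2 + (v j1 1)^2) with hr1def
      have hr1 : 0 < r1 := Real.sqrt_pos.2 (hpos j1 hj1)
      have hr1sq : r1^2 = (v j1 0)^2 + (v j1 1)^2 := Real.sq_sqrt (by positivity)
      refine ⟨v j1 0 / r1, v j1 1 / r1, ?_, ?_⟩
      · have h2 : (v j1 0 / r1)^2 + (v j1 1 / r1)^2 = ((v j1 0)^2 + (v j1 1)^2)/r1^2 := by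
          ring
        rw [h2, ← hr1sq, div_self (by positivity)]
      · intro j
        constructor
        · have e : (v j1 0 / r1) * v j 0 + (v j1 1 / r1) * v j 1
              = (v j1 0 * v j 0 + v j1 1 * v j 1)/r1 := by ring
          rw [e]
          exact div_nonneg (hreal j1 j) hr1.le
        · rcases eq_or_ne (v j) 0 with hjz | hjz
          · simp [hjz]
          · have hjs : j ∈ s := by simp [hs, hjz]
            set W := (v j0 0)^2 + (v j0 1)^2 with hWdef
            have hW : 0 < W := hpos j0 hj0
            set rj := Real.sqrt ((v j 0)^2 + (v j 1)^2) with hrjdef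
            have hrj : 0 < rj := Real.sqrt_pos.2 (hpos j hjz)
            have hrjsq : rj^2 = (v j 0)^2 + (v j 1)^2 := Real.sq_sqrt (by positivity)
            set Su := v j0 0 * v j1 1 - v j0 1 * v j1 0 with hSudef
            set Cu := v j0 0 * v j1 0 + v j0 1 * v j1 1 with hCudef
            set Sv := v j0 0 * v j 1 - v j0 1 * v j 0 with hSvdef
            set Cv := v j0 0 * v j 0 + v j0 1 * v j 1 with hCvdef
            have hu : Cu^2 + Su^2 = W * r1^2 := by
              rw [hr1sq]; simp only [hSudef, hCudef, hWdef]; ring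
            have hv : Cv^2 + Sv^2 = W * rj^2 := by
              rw [hrjsq]; simp only [hSvdef, hCvdef, hWdef]; ring
            have hmin' : Su * rj ≤ Sv * r1 := by
              have hm := hj1min j hjs
              simp only at hm
              rw [← hSvdef, ← hrjdef, div_le_div_iff₀ hr1 hrj] at hm
              linarith
            have hcross : 0 ≤ Cu * Sv - Su * Cv :=
              sine_lemma W r1 rj Su Sv Cu Cv hW hr1 hrj (hreal j0 j1) (hreal j0 j) hu hv hmin'
            have hid : (v j1 0 * v j 1 - v j1 1 * v j 0) * W = Cu * Sv - Su * Cv := by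
              simp only [hSudef, hCudef, hSvdef, hCvdef, hWdef]; ring
            have h3 : 0 ≤ v j1 0 * v j 1 - v j1 1 * v j 0 := by nlinarith
            have e : v j1 0 / r1 * v j 1 - v j1 1 / r1 * v j 0
                = (v j1 0 * v j 1 - v j1 1 * v j 0)/r1 := by ring
            rw [e]
            exact div_nonneg h3 hr1.le
  -- Build the rotation as a linear isometry equivalence
  let T : EuclideanSpace ℝ (Fin 2) →ₗ[ℝ] EuclideanSpace ℝ (Fin 2) :=
    { toFun := fun w => (WithLp.equiv 2 (Fin 2 → ℝ)).symm ![a * w 0 + b * w 1, a * w 1 - b * w 0]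
      map_add' := by
        intro u w
        ext i
        fin_cases i <;>
          simp [WithLp.equiv_symm_apply, PiLp.toLp_apply, PiLp.add_apply] <;> ring
      map_smul' := by
        intro c w
        ext i
        fin_cases i <;>
          simp [WithLp.equiv_symm_apply, PiLp.toLp_apply, PiLp.smul_apply, smul_eq_mul] <;> ring }
  have hinner : ∀ x y : EuclideanSpace ℝ (Fin 2), (inner ℝ (T x) (T y) : ℝ) = inner ℝ x y := by
    intro x y
    simp only [T, LinearMap.coe_mk, AddHom.coe_mk, PiLp.inner_apply, Fin.sum_univ_two,
      RCLike.inner_apply, conj_trivial, WithLp.equiv_symm_apply, PiLp.toLp_apply, Matrix.cons_val_zero,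
      Matrix.cons_val_one, Matrix.head_cons]
    linear_combination (x 0 * y 0 + x 1 * y 1) * hab
  refine ⟨(T.isometryOfInner hinner).toLinearIsometryEquiv rfl, ?_⟩
  intro j i
  have happ : ((T.isometryOfInner hinner).toLinearIsometryEquiv rfl) (v j) = T (v j) := by
    simp [LinearIsometry.coe_toLinearIsometryEquiv]
  rw [happ]
  fin_cases i
  · simpa [T, WithLp.equiv_symm_apply, PiLp.toLp_apply] using (hcond j).1
  · simpa [T, WithLp.equiv_symm_apply, PiLp.toLp_apply] using (hcond j).2
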